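/- Let n be a natural number and let c₊₊, c₊₀, c₀₀, c₊₋, c₀₋, c₋₋, c₊, c₀, c₋, c✶ be arbitrary real constants. Then the operator −H = c₊₊J₊² + c₊₀(J₊J₀ + J₀J₊) + c₀₀J₀² + c₊₋(J₊J₋ + J₋J₊) + c₀₋(J₀J₋ + J₋J₀) + c₋₋J₋² + c₊J₊ + c₀J₀ + c₋J₋ + c✶·id maps every real polynomial of degree ≤ n to a polynomial of degree ≤ n; i.e. the general quadratic combination of the sl(2,ℝ) generators preserves the finite-dimensional space 𝒫_{n+1} = ⟨1, X, …, Xⁿ⟩ and is therefore quasi-exactly solvable. -/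
import Mathlib


open Polynomial

/-- The lowering generator on `ℝ[X]`: `J₋p = p'`. -/
noncomputable def Jm (p : Polynomial ℝ) : Polynomial ℝ := derivative p

/-- The Cartan generator on `ℝ[X]`: `J₀p = X·p' − (n/2)·p`. -/
noncomputable def J0 (n : ℕ) (p : Polynomial ℝ) : Polynomial ℝ :=
  X * derivative p - C ((n : ℝ) / 2) * p

/-- The raising generator on `ℝ[X]`: `J₊p = X²·p' − n·X·p`. -/
noncomputable def Jp (n : ℕ) (p : Polynomial ℝ) : Polynomial ℝ :=
  X ^ 2 * derivative p - C (n : ℝ) * X * p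

lemma Jm_deg {n : ℕ} {p : Polynomial ℝ} (hp : p.degree ≤ n) : (Jm p).degree ≤ n :=
  degree_derivative_le.trans hp

lemma J0_deg {n : ℕ} {p : Polynomial ℝ} (hp : p.degree ≤ n) : (J0 n p).degree ≤ n := by
  have hp' : ∀ m : ℕ, n < m → p.coeff m = 0 := fun m h =>
    (degree_le_iff_coeff_zero p n).mp hp m (by exact_mod_cast h)
  rw [degree_le_iff_coeff_zero]
  intro m hm
  have hm' : n < m := by exact_mod_cast hm
  obtain ⟨k, rfl⟩ : ∃ k, m = k + 1 := ⟨m - 1, by omega⟩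
  rw [J0, coeff_sub, coeff_X_mul, coeff_derivative, coeff_C_mul, hp' (k + 1) hm']
  ring

lemma Jp_deg {n : ℕ} {p : Polynomial ℝ} (hp : p.degree ≤ n) : (Jp n p).degree ≤ n := by
  have hp' : ∀ m : ℕ, n < m → p.coeff m = 0 := fun m h =>
    (degree_le_iff_coeff_zero p n).mp hp m (by exact_mod_cast h)
  rw [degree_le_iff_coeff_zero]
  intro m hm
  have hm' : n < m := by exact_mod_cast hm
  obtain ⟨k, rfl⟩ : ∃ k, m = k + 1 := ⟨m - 1, by omega⟩
  have hXp : (C (n : ℝ) * X * p).coeff (k + 1) = (n : ℝ) * p.coeff k := by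
    rw [mul_assoc, coeff_C_mul, coeff_X_mul]
  rw [Jp, coeff_sub, mul_comm (X ^ 2 : Polynomial ℝ), coeff_mul_X_pow', hXp]
  rcases k with _ | j
  · have hn : n = 0 := by omega
    simp [hn]
  · have h2 : 2 ≤ j + 1 + 1 := by omega
    rw [if_pos h2]
    have hj : j + 1 + 1 - 2 = j := by omega
    rw [hj, coeff_derivative]
    rcases eq_or_lt_of_le (show n ≤ j + 1 by omega) with h | h
    · subst h
      push_cast
      ring
    · rw [hp' (j + 1) h]
      ring

lemma add_deg {n : ℕ} {a b : Polynomial ℝ} (ha : a.degree ≤ n) (hb : b.degree ≤ n) :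
    (a + b).degree ≤ n :=
  (degree_add_le _ _).trans (max_le ha hb)

lemma Cmul_deg {n : ℕ} (c : ℝ) {q : Polynomial ℝ} (hq : q.degree ≤ n) :
    (C c * q).degree ≤ n := by
  calc (C c * q).degree ≤ (C c).degree + q.degree := degree_mul_le _ _
  _ ≤ 0 + (n : WithBot ℕ) := add_le_add degree_C_le hq
  _ = n := zero_add _

/-- The general quadratic combination of the `sl(2,ℝ)` generators preserves the space of
polynomials of degree at most `n`, hence is quasi-exactly solvable. -/
theorem general_QES_operator_preserves_Pn (n : ℕ)
    (cpp cp0 c00 cpm c0m cmm cp c0 cm cs : ℝ)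
    (p : Polynomial ℝ) (hp : p.degree ≤ n) :
    (C cpp * Jp n (Jp n p)
      + C cp0 * (Jp n (J0 n p) + J0 n (Jp n p))
      + C c00 * J0 n (J0 n p)
      + C cpm * (Jp n (Jm p) + Jm (Jp n p))
      + C c0m * (J0 n (Jm p) + Jm (J0 n p))
      + C cmm * Jm (Jm p)
      + C cp * Jp n p + C c0 * J0 n p + C cm * Jm p + C cs * p).degree ≤ n :=
  add_deg (add_deg (add_deg (add_deg (add_deg (add_deg (add_deg (add_deg (add_deg
    (Cmul_deg _ (Jp_deg (Jp_deg hp)))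
    (Cmul_deg _ (add_deg (Jp_deg (J0_deg hp)) (J0_deg (Jp_deg hp)))))
    (Cmul_deg _ (J0_deg (J0_deg hp))))
    (Cmul_deg _ (add_deg (Jp_deg (Jm_deg hp)) (Jm_deg (Jp_deg hp)))))
    (Cmul_deg _ (add_deg (J0_deg (Jm_deg hp)) (Jm_deg (J0_deg hp)))))
    (Cmul_deg _ (Jm_deg (Jm_deg hp))))
    (Cmul_deg _ (Jp_deg hp)))
    (Cmul_deg _ (J0_deg hp)))
    (Cmul_deg _ (Jm_deg hp)))
    (Cmul_deg _ hp)
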